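/- arXiv:1209.1329 — 3 statements merged into one kernel-verified Lean document; each statement's English description precedes it below -/
import Mathlib

section
/- For every integer n ≥ 1 and every real number u, the derivative of the Bessel polynomial satisfies q_n′(u) = q_n(u) − (u/(2n − 1)) · q_{n−1}(u). -/
open Finset

/-- The Bessel polynomial `q_n(u) = ∑_{k=0}^n (n!(2n−k)! 2^k)/((2n)!(n−k)! k!) u^k`. -/
noncomputable def besselQ (n : ℕ) (u : ℝ) : ℝ :=
  ∑ k ∈ Finset.range (n + 1),
    ((n.factorial : ℝ) * (2 * n - k).factorial * 2 ^ k) /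
      ((2 * n).factorial * (n - k).factorial * k.factorial) * u ^ k

private lemma key (k m : ℕ) :
    ((k:ℝ)+2) * ((((k+m+2).factorial :ℝ) * ((2*m+k+2).factorial) * 2^(k+2)) /
      (((2*k+2*m+4).factorial) * (m.factorial) * ((k+2).factorial)))
    = (((k+m+2).factorial : ℝ) * ((2*m+k+3).factorial) * 2^(k+1)) /
        (((2*k+2*m+4).factorial) * ((m+1).factorial) * ((k+1).factorial))
      - (((k+m+1).factorial : ℝ) * ((2*m+k+2).factorial) * 2^k) /
          (((2*k+2*m+2).factorial) * ((m+1).factorial) * (k.factorial)) / (2*((k:ℝ)+(m:ℝ)+2) - 1) := by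
  have h1 : (k+m+2).factorial = (k+m+2) * (k+m+1).factorial := rfl
  have h2 : (2*m+k+3).factorial = (2*m+k+3) * (2*m+k+2).factorial := rfl
  have h3 : (2*k+2*m+4).factorial = (2*k+2*m+4) * ((2*k+2*m+3) * (2*k+2*m+2).factorial) := rfl
  have h4 : (m+1).factorial = (m+1) * m.factorial := rfl
  have h5 : (k+2).factorial = (k+2) * ((k+1) * k.factorial) := rfl
  have h6 : (k+1).factorial = (k+1) * k.factorial := rfl
  rw [h1, h2, h3, h4, h5, h6]
  have f1 : (0:ℝ) < (k+m+1).factorial := by positivity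
  have f2 : (0:ℝ) < (2*m+k+2).factorial := by positivity
  have f3 : (0:ℝ) < (2*k+2*m+2).factorial := by positivity
  have f4 : (0:ℝ) < m.factorial := by positivity
  have f5 : (0:ℝ) < k.factorial := by positivity
  have f6 : (0:ℝ) < 2*((k:ℝ)+(m:ℝ)+2) - 1 := by
    have := Nat.cast_nonneg (α := ℝ) k; have := Nat.cast_nonneg (α := ℝ) m; linarith
  push_cast
  field_simp
  ring

private lemma key2 (m : ℕ) :
    (((m+1).factorial:ℝ) * (m+1).factorial * 2^(m+1)) /
      (((2*m+2).factorial) * (Nat.factorial 0) * (m+1).factorial)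
    = ((m.factorial:ℝ) * m.factorial * 2^m / ((2*m).factorial * (Nat.factorial 0) * m.factorial)) /
        (2*((m:ℝ)+1) - 1) := by
  have h1 : (m+1).factorial = (m+1) * m.factorial := rfl
  have h2 : (2*m+2).factorial = (2*m+2) * ((2*m+1) * (2*m).factorial) := rfl
  rw [h1, h2, Nat.factorial_zero]
  have f1 : (0:ℝ) < m.factorial := by positivity
  have f2 : (0:ℝ) < (2*m).factorial := by positivity
  have f3 : (0:ℝ) < 2*((m:ℝ)+1) - 1 := by
    have := Nat.cast_nonneg (α := ℝ) m; linarith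
  push_cast
  field_simp
  have f4 : (1 + (m:ℝ)*2) ≠ 0 := by positivity
  field_simp
  ring

/-- Derivative relation for the Bessel polynomials:
`q_n′(u) = q_n(u) − (u/(2n − 1)) q_{n−1}(u)` for `n ≥ 1`. -/
theorem besselQ_deriv (n : ℕ) (hn : 1 ≤ n) (u : ℝ) :
    deriv (besselQ n) u =
      besselQ n u - u / (2 * (n : ℝ) - 1) * besselQ (n - 1) u := by
  have hd : HasDerivAt (besselQ n)
      (∑ k ∈ Finset.range (n + 1),
        ((n.factorial : ℝ) * (2 * n - k).factorial * 2 ^ k) /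
          ((2 * n).factorial * (n - k).factorial * k.factorial) * (k * u ^ (k-1))) u := by
    apply HasDerivAt.fun_sum
    intro k _
    exact (hasDerivAt_pow k u).const_mul _
  rw [hd.deriv]
  unfold besselQ
  rw [Finset.mul_sum]
  obtain ⟨m, rfl⟩ : ∃ m, n = m + 1 := ⟨n - 1, by omega⟩
  simp only [Nat.add_sub_cancel]
  rw [Finset.sum_range_succ' _ (m+1), Finset.sum_range_succ'
    (fun k => ((((m+1).factorial:ℝ)) * (2 * (m+1) - k).factorial * 2 ^ k) /
      ((2 * (m+1)).factorial * ((m+1) - k).factorial * k.factorial) * u ^ k) (m+1)]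
  simp only [Nat.cast_zero, zero_mul, mul_zero, add_zero, Nat.add_sub_cancel]
  rw [add_sub_right_comm, ← Finset.sum_sub_distrib, Finset.sum_range_succ' _ m,
    Finset.sum_range_succ _ m]
  have hlast : (((m+1).factorial:ℝ) * (2*(m+1) - (m+1)).factorial * 2^(m+1)) /
        ((2*(m+1)).factorial * ((m+1)-(m+1)).factorial * (m+1).factorial) * u^(m+1)
      - u / (2 * (((m+1:ℕ)):ℝ) - 1) *
        ((m.factorial:ℝ) * (2*m - m).factorial * 2^m /
          ((2*m).factorial * (m - m).factorial * m.factorial) * u^m) = 0 := by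
    have h := key2 m
    simp only [show 2*(m+1) - (m+1) = m+1 from by omega, show (m+1)-(m+1) = 0 from by omega,
      show 2*m - m = m from by omega, show m - m = 0 from by omega,
      show 2*(m+1) = 2*m+2 from by omega, show 2*m+2 - (m+1) = m+1 from by omega]
    push_cast
    push_cast at h
    linear_combination u^(m+1) * h
  rw [hlast, add_zero]
  have ha : (((m+1).factorial:ℝ) * (2*(m+1) - (0+1)).factorial * 2^(0+1)) /
        ((2*(m+1)).factorial * ((m+1)-(0+1)).factorial * (0+1).factorial) * ((((0:ℕ)+1:ℕ)):ℝ) * u^0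
      = (((m+1).factorial:ℝ) * (2*(m+1) - 0).factorial * 2^0) /
        ((2*(m+1)).factorial * ((m+1)-0).factorial * (Nat.factorial 0)) * u^0 := by
    simp only [show 2*(m+1) - (0+1) = 2*m+1 from by omega, show (m+1) - (0+1) = m from by omega,
      show 2*(m+1) - 0 = 2*m+2 from by omega, show (m+1) - 0 = m+1 from by omega,
      show 2*(m+1) = 2*m+2 from by omega, show 2*m+2 - (0+1) = 2*m+1 from by omega,
      show 2*m+2 - 0 = 2*m+2 from by omega]
    have h1 : (m+1).factorial = (m+1) * m.factorial := rfl
    have h2 : (2*m+2).factorial = (2*m+2) * (2*m+1).factorial := rfl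
    rw [h1, h2]
    have f1 : (0:ℝ) < m.factorial := by positivity
    have f2 : (0:ℝ) < (2*m+1).factorial := by positivity
    push_cast
    field_simp
    ring
  have hX : ∑ k ∈ Finset.range m,
        (((m+1).factorial:ℝ) * (2*(m+1) - (k+1+1)).factorial * 2^(k+1+1)) /
          ((2*(m+1)).factorial * ((m+1) - (k+1+1)).factorial * (k+1+1).factorial) *
          ((((k+1+1:ℕ)):ℝ) * u^(k+1))
      = ∑ k ∈ Finset.range m,
        ((((m+1).factorial:ℝ) * (2*(m+1) - (k+1)).factorial * 2^(k+1)) /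
            ((2*(m+1)).factorial * ((m+1) - (k+1)).factorial * (k+1).factorial) * u^(k+1)
          - u / (2 * (((m+1:ℕ)):ℝ) - 1) *
            ((m.factorial:ℝ) * (2*m - k).factorial * 2^k /
              ((2*m).factorial * (m - k).factorial * k.factorial) * u^k)) := by
    refine Finset.sum_congr rfl fun k hk => ?_
    rw [Finset.mem_range] at hk
    obtain ⟨m', rfl⟩ : ∃ m', m = k + m' + 1 := ⟨m - k - 1, by omega⟩
    have h := key k m'
    simp only [show k+1+1 = k+2 from by omega, show k+m'+1+1 = k+m'+2 from by omega,
      show 2*(k+m'+2) - (k+2) = 2*m'+k+2 from by omega,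
      show 2*(k+m'+1+1) - (k+2) = 2*m'+k+2 from by omega,
      show 2*k+2*m'+4 - (k+2) = 2*m'+k+2 from by omega,
      show k+m'+2 - (k+2) = m' from by omega,
      show 2*(k+m'+2) - (k+1) = 2*m'+k+3 from by omega,
      show 2*(k+m'+1+1) - (k+1) = 2*m'+k+3 from by omega,
      show 2*k+2*m'+4 - (k+1) = 2*m'+k+3 from by omega,
      show k+m'+2 - (k+1) = m'+1 from by omega,
      show 2*(k+m'+2) = 2*k+2*m'+4 from by omega,
      show 2*(k+m'+1) - k = 2*m'+k+2 from by omega,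
      show 2*k+2*m'+2 - k = 2*m'+k+2 from by omega,
      show k+m'+1 - k = m'+1 from by omega,
      show 2*(k+m'+1) = 2*k+2*m'+2 from by omega]
    push_cast
    push_cast at h
    linear_combination u^(k+1) * h
  linear_combination hX + ha
end

section
/- For all integers n, m ≥ 1, all real numbers a₁, a₂ with a₂ ≠ 0, and every integer k with 0 ≤ k ≤ n+m−1, the linearization coefficients satisfy β_k^{(n+1,m−1)}(a₁,a₂) − (a₁²(2m−1)(2m+1))/(a₂²(2n−1)(2n+1)) · β_k^{(n−1,m+1)}(a₁,a₂) = β_k^{(n,m−1)}(a₁,a₂) − (a₁²(2m−1)(2m+1))/(a₂²(2n−1)(2n+1)) · β_k^{(n−1,m)}(a₁,a₂). -/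
open Finset
open Polynomial

noncomputable def bc (n k : ℕ) : ℝ :=
  ((n.factorial : ℝ) * (2 * n - k).factorial * 2 ^ k) /
    ((2 * n).factorial * (n - k).factorial * k.factorial)


lemma besselQ_eq (n : ℕ) (u : ℝ) : besselQ n u = ∑ k ∈ range (n+1), bc n k * u ^ k := rfl


lemma bc_zero (n : ℕ) : bc n 0 = 1 := by
  have h1 : ((2*n).factorial : ℝ) ≠ 0 := Nat.cast_ne_zero.mpr (Nat.factorial_ne_zero _)
  have h2 : ((n).factorial : ℝ) ≠ 0 := Nat.cast_ne_zero.mpr (Nat.factorial_ne_zero _)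
  simp [bc]
  field_simp


lemma bc_diag_pos (n : ℕ) : 0 < bc n n := by
  have e1 : 2*n - n = n := by omega
  have e2 : n - n = 0 := by omega
  rw [bc, e1, e2]
  have := Nat.factorial_pos n
  have := Nat.factorial_pos (2*n)
  positivity

lemma bc_one (n : ℕ) : bc (n+1) 1 = 1 := by
  have e1 : 2*(n+1) - 1 = 2*n+1 := by omega
  have e2 : (n+1) - 1 = n := by omega
  rw [bc, e1, e2]
  have f1 : ((n+1).factorial : ℝ) = (n+1) * n.factorial := by
    push_cast [Nat.factorial_succ]; ring
  have f2 : ((2*(n+1)).factorial : ℝ) = (2*n+2) * (2*n+1).factorial := by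
    rw [show 2*(n+1) = (2*n+1)+1 from by omega]
    push_cast [Nat.factorial_succ]; ring
  rw [f1, f2]
  have h1 : ((2*n+1).factorial : ℝ) ≠ 0 := Nat.cast_ne_zero.mpr (Nat.factorial_ne_zero _)
  have h2 : ((n).factorial : ℝ) ≠ 0 := Nat.cast_ne_zero.mpr (Nat.factorial_ne_zero _)
  have h3 : ((n:ℝ)+1) ≠ 0 := by positivity
  simp only [Nat.factorial_one, Nat.cast_one, pow_one]
  field_simp

lemma bc_top (j : ℕ) :
    bc (j+2) (j+2) * ((2*(j:ℝ)+1)*(2*(j:ℝ)+3)) = bc j j := by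
  have e1 : 2*(j+2) - (j+2) = j+2 := by omega
  have e2 : (j+2) - (j+2) = 0 := by omega
  have e3 : 2*j - j = j := by omega
  have e4 : j - j = 0 := by omega
  rw [bc, bc, e1, e2, e3, e4]
  have f1 : ((j+2).factorial : ℝ) = (j+2)*(j+1)*j.factorial := by
    rw [show j+2 = j+1+1 from rfl]; push_cast [Nat.factorial_succ]; ring
  have f2 : ((2*(j+2)).factorial : ℝ)
      = (2*j+4)*(2*j+3)*(2*j+2)*(2*j+1)*(2*j).factorial := by
    rw [show 2*(j+2) = 2*j+1+1+1+1 from by omega]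
    push_cast [Nat.factorial_succ]; ring
  rw [f1, f2]
  have h1 : ((2*j).factorial : ℝ) ≠ 0 := Nat.cast_ne_zero.mpr (Nat.factorial_ne_zero _)
  have h2 : ((j).factorial : ℝ) ≠ 0 := Nat.cast_ne_zero.mpr (Nat.factorial_ne_zero _)
  have h3 : (2*(j:ℝ)+1) ≠ 0 := by positivity
  have h4 : (2*(j:ℝ)+2) ≠ 0 := by positivity
  have h5 : (2*(j:ℝ)+3) ≠ 0 := by positivity
  have h6 : (2*(j:ℝ)+4) ≠ 0 := by positivity
  have h7 : ((j:ℝ)+1) ≠ 0 := by positivity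
  have h8 : ((j:ℝ)+2) ≠ 0 := by positivity
  field_simp
  ring


lemma bc_interior (j d : ℕ) :
    bc (j+d+3) (j+2) * ((2*(j:ℝ)+2*(d:ℝ)+3)*(2*(j:ℝ)+2*(d:ℝ)+5))
      = bc (j+d+2) (j+2) * ((2*(j:ℝ)+2*(d:ℝ)+3)*(2*(j:ℝ)+2*(d:ℝ)+5))
        + bc (j+d+1) j := by
  have e1 : (j+d+3) - (j+2) = d+1 := by omega
  have e2 : 2*(j+d+3) - (j+2) = j+2*d+4 := by omega
  have e3 : (j+d+2) - (j+2) = d := by omega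
  have e4 : 2*(j+d+2) - (j+2) = j+2*d+2 := by omega
  have e5 : (j+d+1) - j = d+1 := by omega
  have e6 : 2*(j+d+1) - j = j+2*d+2 := by omega
  rw [bc, bc, bc, e1, e2, e3, e4, e5, e6]
  -- base quantities
  have f1 : ((j+d+3).factorial : ℝ) = ((j:ℝ)+d+3)*((j:ℝ)+d+2)*(j+d+1).factorial := by
    rw [show j+d+3 = j+d+1+1+1 from by omega]; push_cast [Nat.factorial_succ]; ring
  have f2 : ((j+d+2).factorial : ℝ) = ((j:ℝ)+d+2)*(j+d+1).factorial := by
    rw [show j+d+2 = j+d+1+1 from by omega]; push_cast [Nat.factorial_succ]; ring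
  have f3 : ((j+2*d+4).factorial : ℝ) = ((j:ℝ)+2*d+4)*((j:ℝ)+2*d+3)*(j+2*d+2).factorial := by
    rw [show j+2*d+4 = j+2*d+2+1+1 from by omega]; push_cast [Nat.factorial_succ]; ring
  have f4 : ((2*(j+d+3)).factorial : ℝ)
      = (2*(j:ℝ)+2*d+6)*(2*(j:ℝ)+2*d+5)*(2*(j:ℝ)+2*d+4)*(2*(j:ℝ)+2*d+3)*(2*(j+d+1)).factorial := by
    rw [show 2*(j+d+3) = 2*(j+d+1)+1+1+1+1 from by omega]; push_cast [Nat.factorial_succ]; ring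
  have f5 : ((2*(j+d+2)).factorial : ℝ)
      = (2*(j:ℝ)+2*d+4)*(2*(j:ℝ)+2*d+3)*(2*(j+d+1)).factorial := by
    rw [show 2*(j+d+2) = 2*(j+d+1)+1+1 from by omega]; push_cast [Nat.factorial_succ]; ring
  have f6 : ((d+1).factorial : ℝ) = ((d:ℝ)+1)*d.factorial := by
    push_cast [Nat.factorial_succ]; ring
  have f7 : ((j+2).factorial : ℝ) = ((j:ℝ)+2)*((j:ℝ)+1)*j.factorial := by
    rw [show j+2 = j+1+1 from rfl]; push_cast [Nat.factorial_succ]; ring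
  have f8 : ((2:ℝ)^(j+2)) = 4*2^j := by ring
  rw [f1, f2, f3, f4, f5, f6, f7, f8]
  have h1 : ((j+d+1).factorial : ℝ) ≠ 0 := Nat.cast_ne_zero.mpr (Nat.factorial_ne_zero _)
  have h2 : ((j+2*d+2).factorial : ℝ) ≠ 0 := Nat.cast_ne_zero.mpr (Nat.factorial_ne_zero _)
  have h3 : ((2*(j+d+1)).factorial : ℝ) ≠ 0 := Nat.cast_ne_zero.mpr (Nat.factorial_ne_zero _)
  have h4 : ((d).factorial : ℝ) ≠ 0 := Nat.cast_ne_zero.mpr (Nat.factorial_ne_zero _)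
  have h5 : ((j).factorial : ℝ) ≠ 0 := Nat.cast_ne_zero.mpr (Nat.factorial_ne_zero _)
  have h6 : ((j:ℝ)+1) ≠ 0 := by positivity
  have h7 : ((j:ℝ)+2) ≠ 0 := by positivity
  have h8 : ((d:ℝ)+1) ≠ 0 := by positivity
  have h9 : (2*(j:ℝ)+2*d+3) ≠ 0 := by positivity
  have h10 : (2*(j:ℝ)+2*d+4) ≠ 0 := by positivity
  have h11 : (2*(j:ℝ)+2*d+5) ≠ 0 := by positivity
  have h12 : (2*(j:ℝ)+2*d+6) ≠ 0 := by positivity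
  have h13 : ((j:ℝ)+d+2) ≠ 0 := by positivity
  have h14 : ((j:ℝ)+d+3) ≠ 0 := by positivity
  have h15 : ((j:ℝ)+2*d+3) ≠ 0 := by positivity
  have h16 : ((j:ℝ)+2*d+4) ≠ 0 := by positivity
  have h17 : ((2:ℝ)^j) ≠ 0 := by positivity
  field_simp
  ring

lemma besselQ_rec (s : ℕ) (u : ℝ) :
    besselQ (s+2) u = besselQ (s+1) u
      + u^2/((2*(s:ℝ)+1)*(2*(s:ℝ)+3)) * besselQ s u := by
  have hD : (2*(s:ℝ)+1)*(2*(s:ℝ)+3) ≠ 0 := by positivity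
  have b1 : bc (s+2) 1 = 1 := bc_one (s+1)
  have b1' : bc (s+1) 1 = 1 := bc_one s
  have L : (∑ k ∈ range (s+2+1), bc (s+2) k * u ^ k)
      = (∑ k ∈ range (s+1), bc (s+2) (k+1+1) * u ^ (k+1+1)) + (u + 1) := by
    rw [Finset.sum_range_succ' _ (s+2), Finset.sum_range_succ' _ (s+1)]
    norm_num [bc_zero, b1]; ring
  have M : (∑ k ∈ range (s+1+1), bc (s+1) k * u ^ k)
      = (∑ k ∈ range s, bc (s+1) (k+1+1) * u ^ (k+1+1)) + (u + 1) := by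
    rw [Finset.sum_range_succ' _ (s+1), Finset.sum_range_succ' _ s]
    norm_num [bc_zero, b1']; ring
  rw [besselQ_eq, besselQ_eq, besselQ_eq, L, M]
  rw [Finset.sum_range_succ (fun k => bc (s+2) (k+1+1) * u ^ (k+1+1)) s]
  rw [Finset.mul_sum, Finset.sum_range_succ
    (fun k => u^2/((2*(s:ℝ)+1)*(2*(s:ℝ)+3)) * (bc s k * u ^ k)) s]
  have htop : bc (s+2) (s+1+1) * u ^ (s+1+1)
      = u^2/((2*(s:ℝ)+1)*(2*(s:ℝ)+3)) * (bc s s * u ^ s) := by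
    have h := bc_top s
    field_simp
    linear_combination u^(s+2) * h
  have hint : ∀ k ∈ Finset.range s,
      bc (s+2) (k+1+1) * u ^ (k+1+1)
        = bc (s+1) (k+1+1) * u ^ (k+1+1)
          + u^2/((2*(s:ℝ)+1)*(2*(s:ℝ)+3)) * (bc s k * u ^ k) := by
    intro k hk
    rw [Finset.mem_range] at hk
    obtain ⟨d, rfl⟩ : ∃ d, s = k + d + 1 := ⟨s - k - 1, by omega⟩
    have h := bc_interior k d
    have hb1 : bc (k+d+1+2) (k+1+1) = bc (k+d+3) (k+2) := rfl
    have hb2 : bc (k+d+1+1) (k+1+1) = bc (k+d+2) (k+2) := rfl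
    rw [hb1, hb2]
    have hc : ((k+d+1 : ℕ) : ℝ) = (k:ℝ) + d + 1 := by push_cast; ring
    rw [hc]
    have hD' : (2*((k:ℝ)+d+1)+1)*(2*((k:ℝ)+d+1)+3) ≠ 0 := by positivity
    field_simp
    linear_combination u^(k+2) * h
  rw [Finset.sum_congr rfl hint, Finset.sum_add_distrib, htop]
  ring

noncomputable def besselP (n : ℕ) : Polynomial ℝ :=
  ∑ k ∈ range (n+1), Polynomial.C (bc n k) * Polynomial.X ^ k

lemma besselP_eval (n : ℕ) (u : ℝ) : (besselP n).eval u = besselQ n u := by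
  simp [besselP, besselQ_eq, eval_finset_sum]

lemma besselP_coeff (n i : ℕ) : (besselP n).coeff i = if i ≤ n then bc n i else 0 := by
  simp [besselP, finset_sum_coeff, coeff_C_mul, coeff_X_pow, Nat.lt_succ_iff]


lemma bessel_indep (N : ℕ) :  ∀ (γ : ℕ → ℝ),
    (∀ u : ℝ, ∑ i ∈ range N, γ i * besselQ i u = 0) → ∀ k < N, γ k = 0 := by
  induction N with
  | zero => intro γ h k hk; simp at hk
  | succ N ih =>
    intro γ h k hk
    have hp : (∑ i ∈ range (N+1), Polynomial.C (γ i) * besselP i) = 0 := by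
      apply Polynomial.funext; intro u
      simp [eval_finset_sum, besselP_eval, h u]
    have hN : γ N = 0 := by
      have hc := congrArg (fun p => Polynomial.coeff p N) hp
      simp only [finset_sum_coeff, coeff_C_mul, coeff_zero] at hc
      rw [Finset.sum_eq_single N] at hc
      · rw [besselP_coeff] at hc
        simp at hc
        rcases hc with h|h
        · exact h
        · exact absurd h (ne_of_gt (bc_diag_pos N))
      · intro i hi hne
        rw [besselP_coeff, if_neg (by rw [Finset.mem_range] at hi; omega)]
        ring
      · intro hni; exact absurd (Finset.self_mem_range_succ N) hni
    rcases Nat.lt_succ_iff_lt_or_eq.mp hk with h'|h'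
    · refine ih γ ?_ k h'
      intro u
      have := h u
      rw [Finset.sum_range_succ, hN] at this
      simpa using this
    · subst h'; exact hN

/-- For `n, m ≥ 1`, `a₂ ≠ 0` and `0 ≤ k ≤ n+m−1`, the linearization coefficients satisfy
`β_k^{(n+1,m−1)} − C β_k^{(n−1,m+1)} = β_k^{(n,m−1)} − C β_k^{(n−1,m)}` where
`C = (a₁²(2m−1)(2m+1))/(a₂²(2n−1)(2n+1))`.  Here `β1, β2, β3, β4` denote, respectively,
the linearization coefficients of `q_{n+1}(a₁u) q_{m−1}(a₂u)`, `q_{n−1}(a₁u) q_{m+1}(a₂u)`,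
`q_n(a₁u) q_{m−1}(a₂u)` and `q_{n−1}(a₁u) q_m(a₂u)`. -/
theorem linearization_recurrence (n m k : ℕ) (hn : 1 ≤ n) (hm : 1 ≤ m)
    (hk : k ≤ n + m - 1) (a1 a2 : ℝ) (ha2 : a2 ≠ 0) (β1 β2 β3 β4 : ℕ → ℝ)
    (h1 : ∀ u : ℝ, besselQ (n + 1) (a1 * u) * besselQ (m - 1) (a2 * u) =
      ∑ i ∈ Finset.range (n + m + 1), β1 i * besselQ i u)
    (h2 : ∀ u : ℝ, besselQ (n - 1) (a1 * u) * besselQ (m + 1) (a2 * u) =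
      ∑ i ∈ Finset.range (n + m + 1), β2 i * besselQ i u)
    (h3 : ∀ u : ℝ, besselQ n (a1 * u) * besselQ (m - 1) (a2 * u) =
      ∑ i ∈ Finset.range (n + m), β3 i * besselQ i u)
    (h4 : ∀ u : ℝ, besselQ (n - 1) (a1 * u) * besselQ m (a2 * u) =
      ∑ i ∈ Finset.range (n + m), β4 i * besselQ i u) :
    β1 k -
      a1 ^ 2 * (2 * (m : ℝ) - 1) * (2 * (m : ℝ) + 1) /
        (a2 ^ 2 * (2 * (n : ℝ) - 1) * (2 * (n : ℝ) + 1)) * β2 k =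
    β3 k -
      a1 ^ 2 * (2 * (m : ℝ) - 1) * (2 * (m : ℝ) + 1) /
        (a2 ^ 2 * (2 * (n : ℝ) - 1) * (2 * (n : ℝ) + 1)) * β4 k := by
  obtain ⟨s, rfl⟩ : ∃ s, n = s + 1 := ⟨n - 1, by omega⟩
  obtain ⟨t, rfl⟩ : ∃ t, m = t + 1 := ⟨m - 1, by omega⟩
  obtain ⟨C, hC⟩ : ∃ C : ℝ, C = a1 ^ 2 * (2 * ((t:ℝ)+1) - 1) * (2 * ((t:ℝ)+1) + 1) /
      (a2 ^ 2 * (2 * ((s:ℝ)+1) - 1) * (2 * ((s:ℝ)+1) + 1)) := ⟨_, rfl⟩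
  have hCcast : a1 ^ 2 * (2 * ((t+1 : ℕ) : ℝ) - 1) * (2 * ((t+1 : ℕ) : ℝ) + 1) /
      (a2 ^ 2 * (2 * ((s+1 : ℕ) : ℝ) - 1) * (2 * ((s+1 : ℕ) : ℝ) + 1)) = C := by
    rw [hC]; push_cast; ring
  rw [hCcast]
  -- simplify nat subtractions in hypotheses
  have em : (t + 1) - 1 = t := by omega
  have en : (s + 1) - 1 = s := by omega
  rw [em] at h1 h3
  rw [en] at h2 h4
  -- pointwise identity
  have hpoint : ∀ u : ℝ,
      (besselQ (s+1+1) (a1*u) * besselQ t (a2*u)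
        - C * (besselQ s (a1*u) * besselQ (t+1+1) (a2*u)))
      - (besselQ (s+1) (a1*u) * besselQ t (a2*u)
        - C * (besselQ s (a1*u) * besselQ (t+1) (a2*u))) = 0 := by
    intro u
    have r1 : besselQ (s+1+1) (a1*u) = besselQ (s+1) (a1*u)
        + (a1*u)^2/((2*(s:ℝ)+1)*(2*(s:ℝ)+3)) * besselQ s (a1*u) := besselQ_rec s (a1*u)
    have r2 : besselQ (t+1+1) (a2*u) = besselQ (t+1) (a2*u)
        + (a2*u)^2/((2*(t:ℝ)+1)*(2*(t:ℝ)+3)) * besselQ t (a2*u) := besselQ_rec t (a2*u)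
    have hds : (2*(s:ℝ)+1)*(2*(s:ℝ)+3) ≠ 0 := by positivity
    have hdt : (2*(t:ℝ)+1)*(2*(t:ℝ)+3) ≠ 0 := by positivity
    have hcoef : (a1*u)^2/((2*(s:ℝ)+1)*(2*(s:ℝ)+3))
        = C * ((a2*u)^2/((2*(t:ℝ)+1)*(2*(t:ℝ)+3))) := by
      rw [hC, show a2 ^ 2 * (2 * ((s:ℝ)+1) - 1) * (2 * ((s:ℝ)+1) + 1)
          = a2^2 * ((2*(s:ℝ)+1)*(2*(s:ℝ)+3)) from by ring]
      have ha2' : a2^2 ≠ 0 := pow_ne_zero 2 ha2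
      have hden : a2^2 * ((2*(s:ℝ)+1)*(2*(s:ℝ)+3)) * ((2*(t:ℝ)+1)*(2*(t:ℝ)+3)) ≠ 0 :=
        mul_ne_zero (mul_ne_zero ha2' hds) hdt
      rw [div_mul_div_comm, div_eq_div_iff hds hden]
      ring
    rw [r1, r2]
    linear_combination (besselQ s (a1*u) * besselQ t (a2*u)) * hcoef
  obtain ⟨γ, hγ⟩ : ∃ γ : ℕ → ℝ, γ = fun i =>
    (β1 i - C * β2 i) - (if i < s+1+(t+1) then β3 i - C * β4 i else 0) := ⟨_, rfl⟩
  have hsum : ∀ u : ℝ, ∑ i ∈ range (s+1+(t+1)+1), γ i * besselQ i u = 0 := by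
    intro u
    set N := s+1+(t+1) with hN
    have h5 : ∀ i ∈ range N, γ i * besselQ i u
        = (β1 i * besselQ i u - C * (β2 i * besselQ i u))
          - (β3 i * besselQ i u - C * (β4 i * besselQ i u)) := by
      intro i hi
      rw [Finset.mem_range] at hi
      rw [hγ]; simp only [if_pos hi]; ring
    have htopv : γ N * besselQ N u
        = β1 N * besselQ N u - C * (β2 N * besselQ N u) := by
      rw [hγ]; simp only [lt_self_iff_false, if_false]; ring
    have e : ∑ i ∈ range (N+1), γ i * besselQ i u
        = ((∑ i ∈ range (N+1), β1 i * besselQ i u)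
            - C * (∑ i ∈ range (N+1), β2 i * besselQ i u))
          - ((∑ i ∈ range N, β3 i * besselQ i u)
            - C * (∑ i ∈ range N, β4 i * besselQ i u)) := by
      rw [Finset.sum_range_succ (fun i => γ i * besselQ i u) N,
        Finset.sum_congr rfl h5, htopv, Finset.sum_sub_distrib,
        Finset.sum_sub_distrib, Finset.sum_sub_distrib,
        Finset.sum_range_succ (fun i => β1 i * besselQ i u) N,
        Finset.sum_range_succ (fun i => β2 i * besselQ i u) N,
        ← Finset.mul_sum, ← Finset.mul_sum]
      ring
    rw [e, ← h1 u, ← h2 u, ← h3 u, ← h4 u]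
    exact hpoint u
  have hγk : γ k = 0 := bessel_indep _ γ hsum k (by omega)
  have hklt : k < s+1+(t+1) := by omega
  rw [hγ] at hγk
  simp only [if_pos hklt] at hγk
  linarith
end

section
/- For all integers n, m ≥ 0, every real number a, and every integer k with 0 ≤ k < min(n, m), the linearization coefficient with a₁ = a and a₂ = 1−a vanishes: β_k^{(n,m)}(a, 1−a) = 0. -/
open Finset

namespace BesselAux

open Polynomial

/-- coefficients of the Bessel polynomial -/
noncomputable def bc (n i : ℕ) : ℝ :=
  ((n.factorial : ℝ) * (2 * n - i).factorial * 2 ^ i) /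
      ((2 * n).factorial * (n - i).factorial * i.factorial)

lemma bc_pos (n i : ℕ) : 0 < bc n i := by
  have h1 : (0:ℝ) < n.factorial := by exact_mod_cast n.factorial_pos
  have h2 : (0:ℝ) < (2*n - i).factorial := by exact_mod_cast (2*n - i).factorial_pos
  have h3 : (0:ℝ) < (2*n).factorial := by exact_mod_cast (2*n).factorial_pos
  have h4 : (0:ℝ) < (n - i).factorial := by exact_mod_cast (n - i).factorial_pos
  have h5 : (0:ℝ) < i.factorial := by exact_mod_cast i.factorial_pos
  exact div_pos (by positivity) (by positivity)

lemma bc_zero (n : ℕ) : bc n 0 = 1 := by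
  have h3 : (0:ℝ) < (2*n).factorial := by exact_mod_cast (2*n).factorial_pos
  have h1 : (0:ℝ) < n.factorial := by exact_mod_cast n.factorial_pos
  unfold bc
  rw [Nat.sub_zero, Nat.sub_zero, pow_zero, Nat.factorial_zero]
  rw [div_eq_one_iff_eq (by positivity)]
  push_cast
  ring

lemma bc_one {n : ℕ} (h : 1 ≤ n) : bc n 1 = 1 := by
  obtain ⟨s, rfl⟩ : ∃ s, n = s + 1 := ⟨n-1, by omega⟩
  unfold bc
  rw [show 2*(s+1) - 1 = 2*s+1 by omega, show s+1-1 = s by omega,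
      show 2*(s+1) = (2*s+1)+1 by ring, Nat.factorial_succ (2*s+1),
      Nat.factorial_succ s, Nat.factorial_one]
  have h1 : (0:ℝ) < s.factorial := by exact_mod_cast s.factorial_pos
  have h2 : (0:ℝ) < (2*s+1).factorial := by exact_mod_cast (2*s+1).factorial_pos
  rw [div_eq_one_iff_eq (by push_cast; positivity)]
  push_cast
  ring

/-- the Bessel polynomial as an element of ℝ[X] -/
noncomputable def Qp (n : ℕ) : ℝ[X] :=
  ∑ i ∈ range (n+1), Polynomial.C (bc n i) * Polynomial.X ^ i

lemma coeff_sumCX (f : ℕ → ℝ) (N j : ℕ) :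
    (∑ i ∈ range N, Polynomial.C (f i) * Polynomial.X ^ i).coeff j
      = if j < N then f j else 0 := by
  rw [Polynomial.finset_sum_coeff]
  simp only [Polynomial.coeff_C_mul, Polynomial.coeff_X_pow, mul_ite, mul_one, mul_zero]
  rw [Finset.sum_ite_eq (range N) j f]
  simp [Finset.mem_range]

lemma coeff_Qp (n j : ℕ) : (Qp n).coeff j = if j ≤ n then bc n j else 0 := by
  rw [Qp, coeff_sumCX]
  simp [Nat.lt_succ_iff]

lemma bc_ratio (j r : ℕ) :
    ((j:ℝ)+1) * ((j:ℝ) - 2*((j:ℝ)+(r:ℝ)+1)) * bc (j+r+1) (j+1)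
      + 2*((r:ℝ)+1) * bc (j+r+1) j = 0 := by
  unfold bc
  rw [show 2*(j+r+1) - (j+1) = j+2*r+1 by omega,
      show (j+r+1) - (j+1) = r by omega,
      show 2*(j+r+1) - j = (j+2*r+1)+1 by omega,
      show (j+r+1) - j = r+1 by omega,
      show 2*(j+r+1) = 2*j+2*r+2 by ring,
      Nat.factorial_succ (j+2*r+1), Nat.factorial_succ r, Nat.factorial_succ j]
  have h0 : ((2*j+2*r+2).factorial:ℝ) ≠ 0 := by exact_mod_cast (2*j+2*r+2).factorial_ne_zero
  have h1 : ((j+2*r+1).factorial:ℝ) ≠ 0 := by exact_mod_cast (j+2*r+1).factorial_ne_zero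
  have h2 : ((r).factorial:ℝ) ≠ 0 := by exact_mod_cast r.factorial_ne_zero
  have h3 : ((j).factorial:ℝ) ≠ 0 := by exact_mod_cast j.factorial_ne_zero
  push_cast
  field_simp
  ring

lemma qp_coeff_rec (k j : ℕ) :
    ((j:ℝ)+1) * ((j:ℝ) - 2*(k:ℝ)) * (Qp k).coeff (j+1)
      + 2*((k:ℝ) - (j:ℝ)) * (Qp k).coeff j = 0 := by
  rcases lt_trichotomy j k with h | rfl | h
  · obtain ⟨r, rfl⟩ : ∃ r, k = j + r + 1 := ⟨k - j - 1, by omega⟩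
    rw [coeff_Qp, coeff_Qp, if_pos (by omega), if_pos (by omega)]
    have h0 := bc_ratio j r
    push_cast at h0 ⊢
    linear_combination h0
  · rw [coeff_Qp, coeff_Qp, if_neg (by omega), if_pos le_rfl]
    ring
  · rw [coeff_Qp, coeff_Qp, if_neg (by omega), if_neg (by omega)]
    ring

/-- The ODE satisfied by the Bessel polynomial: `X q'' + 2k q = 2k q' + 2 X q'`. -/
lemma qp_ode (k : ℕ) :
    Polynomial.X * derivative (derivative (Qp k)) + Polynomial.C (2*(k:ℝ)) * Qp k
      = Polynomial.C (2*(k:ℝ)) * derivative (Qp k)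
        + 2 * (Polynomial.X * derivative (Qp k)) := by
  ext j
  rcases j with _ | j
  · simp only [Polynomial.coeff_add, Polynomial.mul_coeff_zero, Polynomial.coeff_X_zero,
      zero_mul, Polynomial.coeff_C_mul, Polynomial.coeff_derivative, zero_add,
      Polynomial.coeff_ofNat_mul, Polynomial.coeff_C_zero, Nat.cast_zero]
    have h0 := qp_coeff_rec k 0
    push_cast at h0 ⊢
    linear_combination h0
  · simp only [Polynomial.coeff_add, Polynomial.coeff_X_mul, Polynomial.coeff_C_mul,
      Polynomial.coeff_derivative, Polynomial.coeff_ofNat_mul]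
    have h0 := qp_coeff_rec k (j+1)
    push_cast at h0 ⊢
    linear_combination h0

/-! ### power series -/

/-- the power series of `e^{-u}` -/
noncomputable def E : PowerSeries ℝ := PowerSeries.rescale (-1) (PowerSeries.exp ℝ)

lemma coeff_E (d : ℕ) : PowerSeries.coeff (R := ℝ) d E = (-1)^d / d.factorial := by
  rw [E, PowerSeries.coeff_rescale, PowerSeries.coeff_exp]
  rw [show ((algebraMap ℚ ℝ) (1 / d.factorial)) = 1/(d.factorial:ℝ) by
    rw [map_div₀, map_one, map_natCast]]
  rw [mul_one_div]

lemma dE : (PowerSeries.derivative ℝ) E = -E := by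
  ext d
  rw [PowerSeries.coeff_derivative, map_neg, coeff_E, coeff_E, Nat.factorial_succ, pow_succ]
  have h1 : (d.factorial:ℝ) ≠ 0 := by exact_mod_cast d.factorial_ne_zero
  push_cast
  field_simp

lemma dexp : (PowerSeries.derivative ℝ) (PowerSeries.exp ℝ) = PowerSeries.exp ℝ := by
  ext d
  rw [PowerSeries.coeff_derivative, PowerSeries.coeff_exp, PowerSeries.coeff_exp,
    Nat.factorial_succ]
  rw [show ((algebraMap ℚ ℝ) (1 / ((d+1) * d.factorial : ℕ))) =
      1/(((d:ℝ)+1) * (d.factorial:ℝ)) by rw [map_div₀, map_one, map_natCast]; push_cast; ring,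
    show ((algebraMap ℚ ℝ) (1 / (d.factorial : ℕ))) = 1/((d.factorial:ℝ)) by
      rw [map_div₀, map_one, map_natCast]]
  have h1 : (d.factorial:ℝ) ≠ 0 := by exact_mod_cast d.factorial_ne_zero
  field_simp

lemma dmul (f g : PowerSeries ℝ) :
    (PowerSeries.derivative ℝ) (f * g)
      = (PowerSeries.derivative ℝ) f * g + f * (PowerSeries.derivative ℝ) g := by
  rw [Derivation.leibniz]
  simp only [smul_eq_mul]
  ring

/-- `F k` is the power series of `q_k(u) e^{-u}`. -/
noncomputable def Fk (k : ℕ) : PowerSeries ℝ := (Qp k : PowerSeries ℝ) * E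

/-- `sk k d` is the `d`-th Taylor coefficient of `q_k(u) e^{-u}`. -/
noncomputable def sk (k d : ℕ) : ℝ := PowerSeries.coeff (R := ℝ) d (Fk k)

lemma qp_ode_series (k : ℕ) :
    PowerSeries.X * ((derivative (derivative (Qp k)) : ℝ[X]) : PowerSeries ℝ)
        + PowerSeries.C (R := ℝ) (2*(k:ℝ)) * ((Qp k : ℝ[X]) : PowerSeries ℝ)
      = PowerSeries.C (R := ℝ) (2*(k:ℝ)) * ((derivative (Qp k) : ℝ[X]) : PowerSeries ℝ)
        + 2 * (PowerSeries.X * ((derivative (Qp k) : ℝ[X]) : PowerSeries ℝ)) := by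
  have h := congrArg (Polynomial.coeToPowerSeries.ringHom (R := ℝ)) (qp_ode k)
  simpa only [map_add, map_mul, map_ofNat, Polynomial.coeToPowerSeries.ringHom_apply,
    Polynomial.coe_C, Polynomial.coe_X] using h

lemma dFk (k : ℕ) :
    (PowerSeries.derivative ℝ) (Fk k)
      = ((derivative (Qp k) : ℝ[X]) : PowerSeries ℝ) * E - ((Qp k : ℝ[X]) : PowerSeries ℝ) * E := by
  rw [Fk, dmul, dE, PowerSeries.derivative_coe]
  ring

lemma ddFk (k : ℕ) :
    (PowerSeries.derivative ℝ) ((PowerSeries.derivative ℝ) (Fk k))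
      = ((derivative (derivative (Qp k)) : ℝ[X]) : PowerSeries ℝ) * E
        - 2 * (((derivative (Qp k) : ℝ[X]) : PowerSeries ℝ) * E) + ((Qp k : ℝ[X]) : PowerSeries ℝ) * E := by
  rw [dFk, map_sub, dmul, dmul, dE, PowerSeries.derivative_coe, PowerSeries.derivative_coe]
  ring

lemma fk_ode (k : ℕ) :
    PowerSeries.X * ((PowerSeries.derivative ℝ) ((PowerSeries.derivative ℝ) (Fk k)))
      = PowerSeries.C (R := ℝ) (2*(k:ℝ)) * (PowerSeries.derivative ℝ) (Fk k)
        + PowerSeries.X * Fk k := by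
  rw [ddFk, dFk, Fk]
  linear_combination E * (qp_ode_series k)

lemma sk_rec (k d : ℕ) :
    ((d:ℝ)+2) * ((d:ℝ)+1-2*(k:ℝ)) * sk k (d+2) = sk k d := by
  have h := congrArg (PowerSeries.coeff (R := ℝ) (d+1)) (fk_ode k)
  simp only [map_add, PowerSeries.coeff_succ_X_mul, PowerSeries.coeff_C_mul,
    PowerSeries.coeff_derivative] at h
  unfold sk
  push_cast at h ⊢
  linear_combination h

lemma sk_zero (k : ℕ) : sk k 0 = 1 := by
  unfold sk Fk
  rw [PowerSeries.coeff_mul, Finset.Nat.sum_antidiagonal_eq_sum_range_succ_mk,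
    Finset.sum_range_succ, Finset.sum_range_zero]
  simp only [Polynomial.coeff_coe, coeff_Qp, coeff_E]
  rw [if_pos (Nat.zero_le k), bc_zero]
  norm_num

lemma sk_one {k : ℕ} (h : 1 ≤ k) : sk k 1 = 0 := by
  unfold sk Fk
  rw [PowerSeries.coeff_mul, Finset.Nat.sum_antidiagonal_eq_sum_range_succ_mk,
    Finset.sum_range_succ, Finset.sum_range_succ, Finset.sum_range_zero]
  simp only [Polynomial.coeff_coe, coeff_Qp, coeff_E]
  rw [if_pos (Nat.zero_le k), if_pos h, bc_zero, bc_one h]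
  norm_num

lemma sk_odd {k t : ℕ} (h : t < k) : sk k (2*t+1) = 0 := by
  induction t with
  | zero => simpa using sk_one (by omega)
  | succ t ih =>
    have h1 : t < k := by omega
    have h2 := sk_rec k (2*t+1)
    rw [ih h1] at h2
    have hA : (((2*t+1:ℕ):ℝ)+2) * (((2*t+1:ℕ):ℝ)+1-2*(k:ℝ)) ≠ 0 := by
      apply mul_ne_zero
      · push_cast; positivity
      · push_cast
        have : (t:ℝ)+1 < (k:ℝ) := by exact_mod_cast h
        intro hcon
        nlinarith
    have h3 : sk k (2*t+1+2) = 0 := by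
      rcases mul_eq_zero.mp h2 with h' | h'
      · exact absurd h' hA
      · exact h'
    rw [show 2*(t+1)+1 = 2*t+1+2 by ring]
    exact h3

/-! ### the reflected polynomial and the Wronskian -/

noncomputable def zp (k : ℕ) : ℝ[X] :=
  ∑ i ∈ range (k+1), Polynomial.C ((-1)^i * bc k i) * Polynomial.X ^ i

lemma coeff_zp (k j : ℕ) : (zp k).coeff j = if j ≤ k then (-1)^j * bc k j else 0 := by
  rw [zp, coeff_sumCX]
  simp [Nat.lt_succ_iff]

lemma zp_coe (k : ℕ) :
    ((zp k : ℝ[X]) : PowerSeries ℝ) = PowerSeries.rescale (-1) ((Qp k : ℝ[X]) : PowerSeries ℝ) := by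
  ext d
  rw [Polynomial.coeff_coe, PowerSeries.coeff_rescale, Polynomial.coeff_coe, coeff_zp, coeff_Qp]
  split_ifs with hd
  · ring
  · ring

noncomputable def Wp (k : ℕ) : ℝ[X] :=
  Qp k * derivative (zp k) - derivative (Qp k) * zp k + (Qp k * zp k + Qp k * zp k)

lemma coeff_Wp (k : ℕ) : (Wp k).coeff (2*k) = 2 * ((-1)^k * (bc k k)^2) := by
  have t1 : (Qp k * derivative (zp k)).coeff (2*k) = 0 := by
    rw [Polynomial.coeff_mul]
    apply Finset.sum_eq_zero
    intro b hb
    rw [Finset.HasAntidiagonal.mem_antidiagonal] at hb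
    rw [Polynomial.coeff_derivative, coeff_Qp, coeff_zp]
    rcases le_or_gt b.1 k with h1 | h1
    · rcases le_or_gt (b.2+1) k with h2 | h2
      · omega
      · rw [if_neg (show ¬ b.2 + 1 ≤ k by omega)]; ring
    · rw [if_neg (show ¬ b.1 ≤ k by omega)]; ring
  have t2 : (derivative (Qp k) * zp k).coeff (2*k) = 0 := by
    rw [Polynomial.coeff_mul]
    apply Finset.sum_eq_zero
    intro b hb
    rw [Finset.HasAntidiagonal.mem_antidiagonal] at hb
    rw [Polynomial.coeff_derivative, coeff_Qp, coeff_zp]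
    rcases le_or_gt (b.1+1) k with h1 | h1
    · rcases le_or_gt b.2 k with h2 | h2
      · omega
      · rw [if_neg (show ¬ b.2 ≤ k by omega)]; ring
    · rw [if_neg (show ¬ b.1 + 1 ≤ k by omega)]; ring
  have t3 : (Qp k * zp k).coeff (2*k) = (-1)^k * (bc k k)^2 := by
    rw [Polynomial.coeff_mul]
    rw [Finset.sum_eq_single_of_mem (k, k) (by rw [Finset.HasAntidiagonal.mem_antidiagonal]; omega)]
    · rw [coeff_Qp, coeff_zp, if_pos le_rfl, if_pos le_rfl]; ring
    · intro b hb hne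
      rw [Finset.HasAntidiagonal.mem_antidiagonal] at hb
      rw [coeff_Qp, coeff_zp]
      have : b.1 ≠ k ∨ b.2 ≠ k := by
        by_contra hcon
        push_neg at hcon
        exact hne (Prod.ext hcon.1 hcon.2)
      rcases le_or_gt b.1 k with h1 | h1
      · rw [if_neg (show ¬ b.2 ≤ k by omega)]; ring
      · rw [if_neg (show ¬ b.1 ≤ k by omega)]; ring
  rw [Wp]
  rw [Polynomial.coeff_add, Polynomial.coeff_sub, Polynomial.coeff_add, t1, t2, t3]
  ring

lemma exp_E : E * PowerSeries.exp ℝ = 1 := by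
  have h := PowerSeries.exp_mul_exp_eq_exp_add (-1 : ℝ) 1
  rw [E]
  calc PowerSeries.rescale (-1) (PowerSeries.exp ℝ) * PowerSeries.exp ℝ
      = PowerSeries.rescale (-1) (PowerSeries.exp ℝ)
          * PowerSeries.rescale 1 (PowerSeries.exp ℝ) := by
        rw [PowerSeries.rescale_one]; rfl
    _ = PowerSeries.rescale (-1 + 1) (PowerSeries.exp ℝ) := h
    _ = 1 := by
        norm_num [PowerSeries.rescale_zero]

lemma hy2 (k : ℕ) :
    PowerSeries.rescale (-1) (Fk k) = ((zp k : ℝ[X]) : PowerSeries ℝ) * PowerSeries.exp ℝ := by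
  rw [Fk, map_mul, zp_coe, E, PowerSeries.rescale_rescale]
  norm_num [PowerSeries.rescale_one]

lemma wser_eq (k : ℕ) :
    Fk k * (PowerSeries.derivative ℝ) (PowerSeries.rescale (-1) (Fk k))
        - (PowerSeries.derivative ℝ) (Fk k) * PowerSeries.rescale (-1) (Fk k)
      = ((Wp k : ℝ[X]) : PowerSeries ℝ) := by
  have h2 : (PowerSeries.derivative ℝ) (((zp k : ℝ[X]) : PowerSeries ℝ) * PowerSeries.exp ℝ)
      = (((derivative (zp k) : ℝ[X]) : PowerSeries ℝ) + ((zp k : ℝ[X]) : PowerSeries ℝ)) * PowerSeries.exp ℝ := by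
    rw [dmul, dexp, PowerSeries.derivative_coe]
    ring
  rw [hy2, h2, dFk, Fk, Wp]
  simp only [Polynomial.coe_add, Polynomial.coe_sub, Polynomial.coe_mul, Polynomial.coe_C,
    map_ofNat]
  linear_combination (((Qp k : ℝ[X]) : PowerSeries ℝ) * ((derivative (zp k) : ℝ[X]) : PowerSeries ℝ)
      + 2 * ((Qp k : ℝ[X]) : PowerSeries ℝ) * ((zp k : ℝ[X]) : PowerSeries ℝ)
      - ((derivative (Qp k) : ℝ[X]) : PowerSeries ℝ) * ((zp k : ℝ[X]) : PowerSeries ℝ)) * exp_E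

lemma coeff_rescale_Fk (k j : ℕ) :
    PowerSeries.coeff (R := ℝ) j (PowerSeries.rescale (-1) (Fk k)) = (-1)^j * sk k j := by
  rw [PowerSeries.coeff_rescale]; rfl

lemma coeff_Wser (k : ℕ) :
    PowerSeries.coeff (R := ℝ) (2*k)
        (Fk k * (PowerSeries.derivative ℝ) (PowerSeries.rescale (-1) (Fk k))
          - (PowerSeries.derivative ℝ) (Fk k) * PowerSeries.rescale (-1) (Fk k))
      = -(2*(2*(k:ℝ)+1) * sk k (2*k+1)) := by
  rw [map_sub, PowerSeries.coeff_mul, PowerSeries.coeff_mul]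
  have key1 : ∑ b ∈ Finset.HasAntidiagonal.antidiagonal (2*k),
      PowerSeries.coeff (R := ℝ) b.1 (Fk k)
        * PowerSeries.coeff (R := ℝ) b.2 ((PowerSeries.derivative ℝ) (PowerSeries.rescale (-1) (Fk k)))
      = -((2*(k:ℝ)+1) * sk k (2*k+1)) := by
    rw [Finset.sum_eq_single_of_mem (0, 2*k) (by simp)]
    · rw [PowerSeries.coeff_derivative, coeff_rescale_Fk]
      have : sk k 0 = 1 := sk_zero k
      show sk k 0 * ((-1)^(2*k+1) * sk k (2*k+1) * ((2*k:ℕ)+1)) = _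
      rw [this, pow_succ, pow_mul]
      push_cast
      ring_nf
    · intro b hb hne
      rw [Finset.HasAntidiagonal.mem_antidiagonal] at hb
      have hb1 : b.1 ≠ 0 := by
        intro hcon
        exact hne (Prod.ext hcon (by omega))
      rw [PowerSeries.coeff_derivative, coeff_rescale_Fk]
      rcases Nat.even_or_odd b.1 with he | ho
      · obtain ⟨s, hs⟩ := he
        obtain ⟨t, ht, htk⟩ : ∃ t, b.2 + 1 = 2*t+1 ∧ t < k := ⟨k - s, by omega, by omega⟩
        rw [ht]
        show sk k b.1 * ((-1)^(2*t+1) * sk k (2*t+1) * _) = 0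
        rw [sk_odd htk]
        ring
      · obtain ⟨t, ht⟩ := ho
        have htk : t < k := by omega
        rw [ht]
        show sk k (2*t+1) * _ = 0
        rw [sk_odd htk]
        ring
  have key2 : ∑ b ∈ Finset.HasAntidiagonal.antidiagonal (2*k),
      PowerSeries.coeff (R := ℝ) b.1 ((PowerSeries.derivative ℝ) (Fk k))
        * PowerSeries.coeff (R := ℝ) b.2 (PowerSeries.rescale (-1) (Fk k))
      = (2*(k:ℝ)+1) * sk k (2*k+1) := by
    rw [Finset.sum_eq_single_of_mem (2*k, 0) (by simp)]
    · rw [PowerSeries.coeff_derivative, coeff_rescale_Fk]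
      have : sk k 0 = 1 := sk_zero k
      show sk k (2*k+1) * ((2*k:ℕ)+1) * ((-1)^0 * sk k 0) = _
      rw [this]
      push_cast
      ring
    · intro b hb hne
      rw [Finset.HasAntidiagonal.mem_antidiagonal] at hb
      have hb2 : b.2 ≠ 0 := by
        intro hcon
        exact hne (Prod.ext (by omega) hcon)
      rw [PowerSeries.coeff_derivative, coeff_rescale_Fk]
      rcases Nat.even_or_odd b.2 with he | ho
      · obtain ⟨s, hs⟩ := he
        obtain ⟨t, ht, htk⟩ : ∃ t, b.1 + 1 = 2*t+1 ∧ t < k := ⟨k - s, by omega, by omega⟩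
        rw [ht]
        show sk k (2*t+1) * _ * _ = 0
        rw [sk_odd htk]
        ring
      · obtain ⟨t, ht⟩ := ho
        have htk : t < k := by omega
        rw [ht]
        show _ * ((-1)^(2*t+1) * sk k (2*t+1)) = 0
        rw [sk_odd htk]
        ring
  rw [key1, key2]
  ring

lemma sigma_ne (k : ℕ) : sk k (2*k+1) ≠ 0 := by
  have h1 := coeff_Wser k
  rw [wser_eq k, Polynomial.coeff_coe, coeff_Wp] at h1
  intro h0
  rw [h0] at h1
  have h2 : ((-1:ℝ))^k ≠ 0 := pow_ne_zero _ (by norm_num)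
  have h3 : bc k k ≠ 0 := ne_of_gt (bc_pos k k)
  have : ((-1:ℝ))^k * (bc k k)^2 = 0 := by linarith
  rcases mul_eq_zero.mp this with h' | h'
  · exact h2 h'
  · exact h3 (pow_eq_zero_iff (by norm_num) |>.mp h')

/-! ### the master identity -/

noncomputable def Qa (a : ℝ) (n : ℕ) : ℝ[X] :=
  ∑ i ∈ range (n+1), Polynomial.C (bc n i * a^i) * Polynomial.X ^ i

lemma eval_Qa (a u : ℝ) (n : ℕ) : (Qa a n).eval u = besselQ n (a * u) := by
  unfold Qa besselQ
  rw [Polynomial.eval_finset_sum]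
  apply Finset.sum_congr rfl
  intro i _
  rw [Polynomial.eval_mul, Polynomial.eval_C, Polynomial.eval_pow, Polynomial.eval_X]
  show bc n i * a ^ i * u ^ i = _
  rw [mul_pow]
  rw [bc]
  ring

lemma eval_Qp (u : ℝ) (n : ℕ) : (Qp n).eval u = besselQ n u := by
  have h := eval_Qa 1 u n
  rw [one_mul] at h
  rw [← h]
  unfold Qa Qp
  simp

lemma coe_Qa (c : ℝ) (n : ℕ) :
    ((Qa c n : ℝ[X]) : PowerSeries ℝ) = PowerSeries.rescale c ((Qp n : ℝ[X]) : PowerSeries ℝ) := by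
  ext d
  rw [Polynomial.coeff_coe, PowerSeries.coeff_rescale, Polynomial.coeff_coe]
  rw [Qa, coeff_sumCX, coeff_Qp]
  split_ifs with h1 h2 h2
  · ring
  · omega
  · omega
  · ring

lemma E_split (a : ℝ) :
    PowerSeries.rescale a E * PowerSeries.rescale (1-a) E = E := by
  rw [E, PowerSeries.rescale_rescale, PowerSeries.rescale_rescale,
    PowerSeries.exp_mul_exp_eq_exp_add]
  congr 1
  ring

lemma master (a : ℝ) (β : ℕ → ℕ → ℕ → ℝ)
    (hβ : ∀ n m : ℕ, ∀ u : ℝ, besselQ n (a * u) * besselQ m ((1 - a) * u) =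
      ∑ k ∈ Finset.range (n + m + 1), β n m k * besselQ k u)
    (n m : ℕ) :
    PowerSeries.rescale a (Fk n) * PowerSeries.rescale (1-a) (Fk m)
      = ∑ k ∈ range (n+m+1), PowerSeries.C (R := ℝ) (β n m k) * Fk k := by
  have hpoly : Qa a n * Qa (1-a) m
      = ∑ k ∈ range (n+m+1), Polynomial.C (β n m k) * Qp k := by
    apply Polynomial.funext
    intro u
    rw [Polynomial.eval_mul, eval_Qa, eval_Qa, hβ n m u, Polynomial.eval_finset_sum]
    apply Finset.sum_congr rfl
    intro k _
    rw [Polynomial.eval_mul, Polynomial.eval_C, eval_Qp]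
  have hcast := congrArg (Polynomial.coeToPowerSeries.ringHom (R := ℝ)) hpoly
  simp only [map_mul, map_sum, Polynomial.coeToPowerSeries.ringHom_apply,
    Polynomial.coe_mul, Polynomial.coe_C] at hcast
  calc PowerSeries.rescale a (Fk n) * PowerSeries.rescale (1-a) (Fk m)
      = (PowerSeries.rescale a ((Qp n : ℝ[X]) : PowerSeries ℝ)
          * PowerSeries.rescale (1-a) ((Qp m : ℝ[X]) : PowerSeries ℝ))
        * (PowerSeries.rescale a E * PowerSeries.rescale (1-a) E) := by
          rw [Fk, Fk, map_mul, map_mul]; ring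
    _ = (((Qa a n : ℝ[X]) : PowerSeries ℝ) * ((Qa (1-a) m : ℝ[X]) : PowerSeries ℝ)) * E := by
          rw [coe_Qa, coe_Qa, E_split]
    _ = (∑ k ∈ range (n+m+1), PowerSeries.C (R := ℝ) (β n m k) * ((Qp k : ℝ[X]) : PowerSeries ℝ)) * E := by
          rw [hcast]
    _ = ∑ k ∈ range (n+m+1), PowerSeries.C (R := ℝ) (β n m k) * Fk k := by
          rw [Finset.sum_mul]
          apply Finset.sum_congr rfl
          intro k _
          rw [Fk]
          ring

end BesselAux

/-- Vanishing of the linearization coefficients with `a₁ = a`, `a₂ = 1−a`: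
`β_k^{(n,m)}(a, 1−a) = 0` for `k < min(n, m)`. -/
theorem linearization_vanishing (a : ℝ) (β : ℕ → ℕ → ℕ → ℝ)
    (hβ : ∀ n m : ℕ, ∀ u : ℝ, besselQ n (a * u) * besselQ m ((1 - a) * u) =
      ∑ k ∈ Finset.range (n + m + 1), β n m k * besselQ k u)
    (n m k : ℕ) (hk : k < min n m) :
    β n m k = 0 := by
  open BesselAux in
  have hM := BesselAux.master a β hβ n m
  suffices H : ∀ j, j < min n m → β n m j = 0 from H k hk
  intro j
  induction j using Nat.strong_induction_on with
  | _ j ih =>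
    intro hj
    have hjn : j < n := lt_of_lt_of_le hj (min_le_left n m)
    have hjm : j < m := lt_of_lt_of_le hj (min_le_right n m)
    have hc := congrArg (PowerSeries.coeff (R := ℝ) (2*j+1)) hM
    have hL : PowerSeries.coeff (R := ℝ) (2*j+1)
        (PowerSeries.rescale a (BesselAux.Fk n)
          * PowerSeries.rescale (1-a) (BesselAux.Fk m)) = 0 := by
      rw [PowerSeries.coeff_mul]
      apply Finset.sum_eq_zero
      intro b hb
      rw [Finset.HasAntidiagonal.mem_antidiagonal] at hb
      rw [PowerSeries.coeff_rescale, PowerSeries.coeff_rescale]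
      rcases Nat.even_or_odd b.1 with he | ho
      · obtain ⟨s, hs⟩ := he
        obtain ⟨t, ht, htm⟩ : ∃ t, b.2 = 2*t+1 ∧ t < m := ⟨(b.2-1)/2, by omega, by omega⟩
        rw [ht]
        show a ^ b.1 * BesselAux.sk n b.1 * ((1-a)^(2*t+1) * BesselAux.sk m (2*t+1)) = 0
        rw [BesselAux.sk_odd htm]
        ring
      · obtain ⟨t, ht⟩ := ho
        have htn : t < n := by omega
        rw [ht]
        show a ^ (2*t+1) * BesselAux.sk n (2*t+1) * _ = 0
        rw [BesselAux.sk_odd htn]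
        ring
    have hR : PowerSeries.coeff (R := ℝ) (2*j+1)
        (∑ k' ∈ Finset.range (n+m+1), PowerSeries.C (R := ℝ) (β n m k') * BesselAux.Fk k')
          = β n m j * BesselAux.sk j (2*j+1) := by
      rw [map_sum]
      rw [Finset.sum_eq_single_of_mem j (Finset.mem_range.mpr (by omega))]
      · rw [PowerSeries.coeff_C_mul]; rfl
      · intro k' _ hne
        rw [PowerSeries.coeff_C_mul]
        rcases lt_or_gt_of_ne hne with h | h
        · rw [ih k' h (by omega)]
          ring
        · have h2 : PowerSeries.coeff (R := ℝ) (2*j+1) (BesselAux.Fk k') = 0 := BesselAux.sk_odd h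
          rw [h2]
          ring
    rw [hL, hR] at hc
    rcases mul_eq_zero.mp hc.symm with h' | h'
    · exact h'
    · exact absurd h' (BesselAux.sigma_ne j)
end
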